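/- Let r ≥ 2, let p < p' be coprime positive integers, and let n ∈ ℕ. Then in A = AddMonoidAlgebra ℤ ℚ: Σ_{λ ∈ Π_{r,n}} Σ_{w ∈ S_r} sign(w) · q^{(pp'/2)‖λ‖² + p'⟨λ, w•δ⟩ + p⟨λ, δ⟩ + ⟨w•δ, δ⟩} = (−1)^{r(r−1)/2} · Σ_{λ ∈ Π_{r,n}} Σ_{w ∈ S_r} sign(w) · q^{(pp'/2)‖λ‖² − p'⟨λ, δ⟩ + p⟨λ, w•δ⟩ − ⟨w•δ, δ⟩}. -/
import Mathlib


open Finset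

noncomputable section

/-- Inner product `⟨u,v⟩ = Σ_i u i * v i` on `ℚ^r`. -/
def ip {r : ℕ} (u v : Fin r → ℚ) : ℚ := ∑ i, u i * v i

/-- Action of `S_r` permuting coordinates: `(w • v) i = v (w⁻¹ i)`. -/
def pact {r : ℕ} (w : Equiv.Perm (Fin r)) (v : Fin r → ℚ) : Fin r → ℚ := fun i => v (w⁻¹ i)

/-- The Weyl vector `δ`, whose (1-indexed) `i`-th coordinate is `(r+1-2i)/2`. -/
def weylδ (r : ℕ) : Fin r → ℚ := fun j => ((r : ℚ) - 1 - 2 * ((j : ℕ) : ℚ)) / 2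

/-- Membership in `V = {v : Fin r → ℚ | Σ_i v i = 0}`. -/
def memV {r : ℕ} (v : Fin r → ℚ) : Prop := ∑ i, v i = 0

/-- Membership in the root lattice `Q_r`. -/
def memQ {r : ℕ} (v : Fin r → ℚ) : Prop := memV v ∧ ∀ i, ∃ m : ℤ, v i = (m : ℚ)

/-- Membership in the weight lattice `P_r`. -/
def memP {r : ℕ} (v : Fin r → ℚ) : Prop := memV v ∧ ∀ i j, ∃ m : ℤ, v i - v j = (m : ℚ)

/-- The first fundamental weight `Λ₁ = ε₁ - (1/r)(ε₁ + ⋯ + ε_r)`. -/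
def Lam1 (r : ℕ) : Fin r → ℚ := fun j => (if (j : ℕ) = 0 then 1 else 0) - 1 / (r : ℚ)

/-- The simple roots, 0-indexed: `srootF i = ε_{i+1} - ε_{i+2}` in 1-indexed notation. -/
def srootF {r : ℕ} (i : Fin (r - 1)) : Fin r → ℚ :=
  fun j => (if (j : ℕ) = (i : ℕ) then 1 else 0) - (if (j : ℕ) = (i : ℕ) + 1 then 1 else 0)

/-- The highest root `θ = ε₁ - ε_r`. -/
def hroot (r : ℕ) : Fin r → ℚ :=
  fun j => (if (j : ℕ) = 0 then 1 else 0) - (if (j : ℕ) = r - 1 then 1 else 0)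

/-- The set `Π_{r,n}` of weights of `L_r(nΛ₁)`:
all `nΛ₁ - a₁α₁ - ⋯ - a_{r-1}α_{r-1}` with `n ≥ a₁ ≥ ⋯ ≥ a_{r-1} ≥ 0`. -/
def PiWts (r n : ℕ) : Set (Fin r → ℚ) :=
  {v | ∃ a : Fin (r - 1) → ℤ, (∀ i, 0 ≤ a i) ∧ (∀ i, a i ≤ (n : ℤ)) ∧
        (∀ i j, i ≤ j → a j ≤ a i) ∧
        v = (n : ℚ) • Lam1 r - ∑ i, (a i : ℚ) • srootF i}

/-- `Π_{r,n}` as a `Finset`: the (finitely many, multiplicity-one) weights of `L_r(nΛ₁)`. -/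
def PiFin (r n : ℕ) : Finset (Fin r → ℚ) :=
  ((Finset.univ : Finset (Fin (r - 1) → Fin (n + 1))).filter
      (fun a => ∀ i j : Fin (r - 1), i ≤ j → ((a j : ℕ) : ℤ) ≤ ((a i : ℕ) : ℤ))).image
    (fun a => (n : ℚ) • Lam1 r - ∑ i, ((a i : ℕ) : ℚ) • srootF i)

lemma sign_eq_signAux {n : ℕ} (f : Equiv.Perm (Fin n)) :
    Equiv.Perm.sign f = Equiv.Perm.signAux f := by
  refine Equiv.Perm.swap_induction_on f (by simp [Equiv.Perm.signAux_one]) ?_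
  intro f x y hxy ih
  rw [map_mul, Equiv.Perm.signAux_mul, ih, Equiv.Perm.sign_swap hxy,
    Equiv.Perm.signAux_swap hxy]

lemma card_finPairsLT (n : ℕ) : (Equiv.Perm.finPairsLT n).card = n * (n - 1) / 2 := by
  rw [Equiv.Perm.finPairsLT, Finset.card_sigma]
  have h : ∀ a : Fin n, ((Finset.range (a : ℕ)).attachFin
      (fun _ hm => (Finset.mem_range.1 hm).trans a.2)).card = (a : ℕ) := by
    intro a; rw [Finset.card_attachFin, Finset.card_range]
  simp only [h]
  rw [Fin.sum_univ_eq_sum_range (fun i => i)]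
  have := Finset.sum_range_id_mul_two n
  omega

lemma sign_revPerm (n : ℕ) :
    Equiv.Perm.sign (Fin.revPerm : Equiv.Perm (Fin n)) = (-1) ^ (n * (n - 1) / 2) := by
  rw [sign_eq_signAux, Equiv.Perm.signAux]
  have h1 : ∀ x ∈ Equiv.Perm.finPairsLT n,
      (if (Fin.revPerm : Equiv.Perm (Fin n)) x.1 ≤ Fin.revPerm x.2 then (-1 : ℤˣ) else 1)
        = -1 := by
    intro x hx
    have hlt := Equiv.Perm.mem_finPairsLT.1 hx
    rw [if_pos]
    simp only [Fin.revPerm_apply]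
    exact le_of_lt (by rwa [Fin.rev_lt_rev])
  rw [Finset.prod_congr rfl h1, Finset.prod_const, card_finPairsLT]

lemma ip_pact {r : ℕ} (w : Equiv.Perm (Fin r)) (u v : Fin r → ℚ) :
    ip (pact w u) (pact w v) = ip u v := by
  unfold ip pact
  exact Equiv.sum_comp w⁻¹ (fun i => u i * v i)

lemma pact_pact {r : ℕ} (u v : Equiv.Perm (Fin r)) (x : Fin r → ℚ) :
    pact u (pact v x) = pact (u * v) x := by
  funext i; simp [pact]

lemma ip_pact_left {r : ℕ} (w : Equiv.Perm (Fin r)) (u v : Fin r → ℚ) :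
    ip (pact w u) v = ip u (pact w⁻¹ v) := by
  unfold ip pact
  rw [← Equiv.sum_comp w (fun i => u (w⁻¹ i) * v i)]
  simp

lemma ip_comm {r : ℕ} (u v : Fin r → ℚ) : ip u v = ip v u := by
  unfold ip; exact Finset.sum_congr rfl fun i _ => mul_comm _ _

lemma ip_neg_right {r : ℕ} (u v : Fin r → ℚ) : ip u (-v) = -ip u v := by
  unfold ip; simp [Finset.sum_neg_distrib]

lemma pact_neg {r : ℕ} (w : Equiv.Perm (Fin r)) (v : Fin r → ℚ) :
    pact w (-v) = -(pact w v) := rfl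

lemma pact_rev_weylδ (r : ℕ) : pact Fin.revPerm (weylδ r) = -(weylδ r) := by
  funext i
  simp only [pact, weylδ, Pi.neg_apply]
  rw [show (Fin.revPerm)⁻¹ = (Fin.revPerm : Equiv.Perm (Fin r)) from rfl]
  simp only [Fin.revPerm_apply, Fin.val_rev]
  have hi : (i : ℕ) < r := i.2
  have : ((r - ((i:ℕ) + 1) : ℕ) : ℚ) = (r : ℚ) - (i : ℕ) - 1 := by
    push_cast [Nat.cast_sub hi]; ring
  rw [this]; ring

lemma pact_one {r : ℕ} (x : Fin r → ℚ) : pact 1 x = x := rfl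


lemma revPerm_inv (r : ℕ) : (Fin.revPerm : Equiv.Perm (Fin r))⁻¹ = Fin.revPerm :=
  Fin.revPerm_symm


/-- compositions of n into r parts, mapped into V -/
def CompImg (r n : ℕ) : Finset (Fin r → ℚ) :=
  ((Finset.univ : Finset (Fin r → Fin (n + 1))).filter (fun c => ∑ i, ((c i : ℕ)) = n)).image
    (fun c => fun j => ((c j : ℕ) : ℚ) - (n : ℚ) / r)

lemma sum_indicator {m : ℕ} (f : Fin m → ℚ) (k : ℕ) :
    ∑ i : Fin m, f i * (if k = (i : ℕ) then 1 else 0) = if h : k < m then f ⟨k, h⟩ else 0 := by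
  split_ifs with h
  · rw [Finset.sum_congr rfl (fun i _ => show f i * (if k = (i:ℕ) then 1 else 0)
      = if (⟨k, h⟩ : Fin m) = i then f i else 0 by
        rw [mul_ite, mul_one, mul_zero]
        congr 1
        simp [Fin.ext_iff, eq_comm])]
    rw [Finset.sum_ite_eq]
    simp
  · apply Finset.sum_eq_zero
    intro i _
    rw [if_neg, mul_zero]
    intro hk; exact h (hk ▸ i.2)

/-- coordinate expansion of elements written with the `a` data -/
lemma coord_expand {r n : ℕ} (a : Fin (r-1) → Fin (n+1)) (j : Fin r) :
    ((n : ℚ) • Lam1 r - ∑ i, ((a i : ℕ) : ℚ) • srootF i) j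
      = (if (j : ℕ) = 0 then (n:ℚ) else 0) - (n:ℚ)/r
        - (if h : (j:ℕ) < r - 1 then ((a ⟨j, h⟩ : ℕ) : ℚ) else 0)
        + (if h : (j:ℕ) = 0 then 0 else
            (if h2 : (j:ℕ) - 1 < r - 1 then ((a ⟨(j:ℕ) - 1, h2⟩ : ℕ) : ℚ) else 0)) := by
  simp only [Pi.sub_apply, Pi.smul_apply, Finset.sum_apply, Lam1, srootF, smul_eq_mul]
  rw [show ∀ x y : ℚ, (n:ℚ) * (x - y) = (n:ℚ)*x - (n:ℚ)*y from fun x y => by ring]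
  have e1 : ∑ i : Fin (r-1), ((a i : ℕ) : ℚ) *
      ((if (j:ℕ) = (i:ℕ) then 1 else 0) - (if (j:ℕ) = (i:ℕ) + 1 then 1 else 0))
      = (∑ i : Fin (r-1), ((a i : ℕ) : ℚ) * (if (j:ℕ) = (i:ℕ) then 1 else 0))
        - ∑ i : Fin (r-1), ((a i : ℕ) : ℚ) * (if (j:ℕ) = (i:ℕ) + 1 then 1 else 0) := by
    rw [← Finset.sum_sub_distrib]
    exact Finset.sum_congr rfl fun i _ => by ring
  rw [e1, sum_indicator]
  have e2 : ∑ i : Fin (r-1), ((a i : ℕ) : ℚ) * (if (j:ℕ) = (i:ℕ) + 1 then 1 else 0)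
      = if h : (j:ℕ) = 0 then 0 else
          (if h2 : (j:ℕ) - 1 < r - 1 then ((a ⟨(j:ℕ) - 1, h2⟩ : ℕ) : ℚ) else 0) := by
    by_cases h : (j:ℕ) = 0
    · rw [dif_pos h]
      apply Finset.sum_eq_zero; intro i _; rw [if_neg (by omega), mul_zero]
    · rw [dif_neg h]
      rw [Finset.sum_congr rfl (fun i _ => show ((a i : ℕ) : ℚ) * (if (j:ℕ) = (i:ℕ)+1 then 1 else 0)
        = ((a i : ℕ) : ℚ) * (if (j:ℕ) - 1 = (i:ℕ) then 1 else 0) by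
          congr 1; apply if_congr _ rfl rfl; constructor <;> (intro hh; omega))]
      rw [sum_indicator]
  rw [e2]
  split_ifs <;> ring

lemma aN_cast {r n : ℕ} (a : Fin (r-1) → Fin (n+1)) (k : ℕ) :
    (((if h : k < r - 1 then (a ⟨k, h⟩ : ℕ) else 0) : ℕ) : ℚ)
      = if h : k < r - 1 then ((a ⟨k, h⟩ : ℕ) : ℚ) else 0 := by
  split_ifs <;> simp

lemma PiFin_subset_CompImg {r n : ℕ} (hr : 1 ≤ r) : PiFin r n ⊆ CompImg r n := by
  intro lam hlam
  rw [PiFin, Finset.mem_image] at hlam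
  obtain ⟨a, ha, rfl⟩ := hlam
  rw [Finset.mem_filter] at ha
  have hmono := ha.2
  set aN : ℕ → ℕ := fun k => if h : k < r - 1 then (a ⟨k, h⟩ : ℕ) else 0 with haN
  set g : ℕ → ℕ := fun k => if k = 0 then n else aN (k - 1) with hg
  have haNle : ∀ k, aN k ≤ n := by
    intro k; rw [haN]; dsimp only; split_ifs
    · exact Fin.is_le _
    · exact Nat.zero_le n
  have hgle : ∀ k, g k ≤ n := by
    intro k; rw [hg]; dsimp only; split_ifs
    · exact le_refl n
    · exact haNle _
  have hganti : ∀ k, g (k + 1) ≤ g k := by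
    intro k
    match k with
    | 0 => exact (hgle 1).trans (by simp [hg])
    | (k+1) =>
      show g (k+2) ≤ g (k+1)
      rw [hg]; dsimp only
      rw [if_neg (by omega), if_neg (by omega)]
      show aN (k+1) ≤ aN k
      rw [haN]; dsimp only
      split_ifs with h1 h2
      · have := hmono ⟨k, by omega⟩ ⟨k+1, h1⟩ (by simp [Fin.le_def])
        exact_mod_cast this
      · omega
      · exact Nat.zero_le _
      · exact Nat.zero_le _
  have hgr : g r = 0 := by
    rw [hg]; dsimp only
    rw [if_neg (by omega), haN]; dsimp only
    rw [dif_neg (by omega)]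
  set c : Fin r → Fin (n+1) := fun j => ⟨g j - g ((j:ℕ)+1),
    Nat.lt_succ_of_le ((Nat.sub_le _ _).trans (hgle _))⟩ with hc
  rw [CompImg, Finset.mem_image]
  refine ⟨c, Finset.mem_filter.2 ⟨Finset.mem_univ _, ?_⟩, ?_⟩
  · -- sum condition
    have hcast : ((∑ i : Fin r, ((c i : ℕ)) : ℕ) : ℤ) = ((n : ℕ) : ℤ) := by
      push_cast
      have : ∀ i : Fin r, (((c i : ℕ) : ℤ)) = (g (i:ℕ) : ℤ) - (g ((i:ℕ)+1) : ℤ) := by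
        intro i
        rw [hc]; dsimp only
        rw [Nat.cast_sub (hganti _)]
      rw [Finset.sum_congr rfl (fun i _ => this i),
        Fin.sum_univ_eq_sum_range (fun k => (g k : ℤ) - (g (k+1) : ℤ)),
        Finset.sum_range_sub' (fun k => (g k : ℤ))]
      rw [hgr]
      simp [hg]
    exact_mod_cast hcast
  · funext j
    rw [coord_expand]
    have hc1 : ((c j : ℕ) : ℚ) = (g (j:ℕ) : ℚ) - (g ((j:ℕ)+1) : ℚ) := by
      rw [hc]; dsimp only
      rw [Nat.cast_sub (hganti _)]
    rw [hc1]
    have h2 : (g ((j:ℕ)+1) : ℚ) = if h : (j:ℕ) < r - 1 then ((a ⟨j, h⟩ : ℕ) : ℚ) else 0 := by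
      rw [hg]; dsimp only
      rw [if_neg (by omega)]
      simpa using aN_cast a (j:ℕ)
    rw [← h2]
    by_cases h0 : (j:ℕ) = 0
    · rw [if_pos h0, dif_pos h0]
      have : (g (j:ℕ) : ℚ) = n := by rw [hg]; dsimp only; rw [if_pos h0]
      rw [this]; ring
    · rw [if_neg h0, dif_neg h0]
      have h3 : (g (j:ℕ) : ℚ)
          = if h2 : (j:ℕ) - 1 < r - 1 then ((a ⟨(j:ℕ) - 1, h2⟩ : ℕ) : ℚ) else 0 := by
        rw [hg]; dsimp only
        rw [if_neg h0]
        simpa using aN_cast a ((j:ℕ) - 1)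
      rw [h3]; ring

lemma CompImg_subset_PiFin {r n : ℕ} (hr : 1 ≤ r) : CompImg r n ⊆ PiFin r n := by
  intro lam hlam
  rw [CompImg, Finset.mem_image] at hlam
  obtain ⟨c, hc, rfl⟩ := hlam
  rw [Finset.mem_filter] at hc
  have hsum := hc.2
  set TN : ℕ → ℕ := fun m => ∑ j : Fin r, (if m ≤ (j:ℕ) then (c j : ℕ) else 0) with hTN
  have hTle : ∀ m, TN m ≤ n := by
    intro m
    rw [hTN]; dsimp only
    calc ∑ j : Fin r, (if m ≤ (j:ℕ) then (c j : ℕ) else 0) ≤ ∑ j : Fin r, (c j : ℕ) :=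
          Finset.sum_le_sum (fun j _ => by split_ifs <;> omega)
      _ = n := hsum
  have hTanti : ∀ m m', m ≤ m' → TN m' ≤ TN m := by
    intro m m' hmm
    exact Finset.sum_le_sum (fun j _ => by split_ifs <;> omega)
  have hT0 : TN 0 = n := by
    rw [hTN]; dsimp only
    exact (Finset.sum_congr rfl (fun j _ => by rw [if_pos (Nat.zero_le _)])).trans hsum
  have hTr : ∀ m, r ≤ m → TN m = 0 := by
    intro m hm
    apply Finset.sum_eq_zero
    intro j _
    rw [if_neg (by have := j.2; omega)]
  have hTdiff : ∀ j : Fin r, TN (j:ℕ) = (c j : ℕ) + TN ((j:ℕ)+1) := by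
    intro j
    have e : ∑ x : Fin r, (if (x:ℕ) = (j:ℕ) then (c x : ℕ) else 0) = (c j : ℕ) := by
      rw [Finset.sum_eq_single j (fun x _ hx => by
        rw [if_neg (fun hv => hx (Fin.ext hv))]) (fun h => absurd (Finset.mem_univ j) h)]
      rw [if_pos rfl]
    rw [hTN]; dsimp only
    rw [← e, ← Finset.sum_add_distrib]
    apply Finset.sum_congr rfl
    intro x _
    split_ifs <;> omega
  set a : Fin (r-1) → Fin (n+1) := fun i => ⟨TN ((i:ℕ)+1), Nat.lt_succ_of_le (hTle _)⟩ with ha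
  rw [PiFin, Finset.mem_image]
  refine ⟨a, Finset.mem_filter.2 ⟨Finset.mem_univ _, ?_⟩, ?_⟩
  · intro i j hij
    have : TN ((j:ℕ)+1) ≤ TN ((i:ℕ)+1) := hTanti _ _ (Nat.add_le_add_right (Fin.le_def.mp hij) 1)
    exact_mod_cast this
  · funext j
    rw [coord_expand]
    have hd1 : (if h : (j:ℕ) < r - 1 then ((a ⟨j, h⟩ : ℕ) : ℚ) else 0)
        = (TN ((j:ℕ)+1) : ℚ) := by
      split_ifs with h
    
      · rfl
      · rw [hTr ((j:ℕ)+1) (by have := j.2; omega)]; simp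
    rw [hd1]
    by_cases h0 : (j:ℕ) = 0
    · rw [if_pos h0, dif_pos h0]
      have h1 : n = (c j : ℕ) + TN ((j:ℕ)+1) := by
        have h2 := hTdiff j
        rw [h0, hT0] at h2
        simpa [h0] using h2
      have hq : ((n:ℕ) : ℚ) = ((c j : ℕ) : ℚ) + (TN ((j:ℕ)+1) : ℚ) := by
        exact_mod_cast congrArg (Nat.cast : ℕ → ℚ) h1
      rw [hq]; ring
    · rw [if_neg h0, dif_neg h0]
      have hlt : (j:ℕ) - 1 < r - 1 := by have := j.2; omega
      rw [dif_pos hlt]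
      have hval : (((a ⟨(j:ℕ)-1, hlt⟩ : ℕ)) : ℚ) = (TN ((j:ℕ)) : ℚ) := by
        rw [ha]; dsimp only
        have he : (j:ℕ) - 1 + 1 = (j:ℕ) := by omega
        rw [he]
      rw [hval]
      have := hTdiff j
      have hq : (TN ((j:ℕ)) : ℚ) = ((c j : ℕ) : ℚ) + (TN ((j:ℕ)+1) : ℚ) := by
        exact_mod_cast congrArg (Nat.cast : ℕ → ℚ) this
      rw [hq]; ring

lemma pact_mem_CompImg {r n : ℕ} (w : Equiv.Perm (Fin r)) {lam : Fin r → ℚ}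
    (h : lam ∈ CompImg r n) : pact w lam ∈ CompImg r n := by
  rw [CompImg, Finset.mem_image] at h ⊢
  obtain ⟨c, hc, rfl⟩ := h
  rw [Finset.mem_filter] at hc
  refine ⟨fun j => c (w⁻¹ j), Finset.mem_filter.2 ⟨Finset.mem_univ _, ?_⟩, rfl⟩
  simpa using (Equiv.sum_comp w⁻¹ (fun i => ((c i : ℕ) : ℕ))).trans hc.2

lemma pact_mem_PiFin {r n : ℕ} (hr : 1 ≤ r) (w : Equiv.Perm (Fin r)) {lam : Fin r → ℚ}
    (h : lam ∈ PiFin r n) : pact w lam ∈ PiFin r n :=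
  CompImg_subset_PiFin hr (pact_mem_CompImg w (PiFin_subset_CompImg hr h))

theorem main_exp (r : ℕ) (p p' : ℚ) (lam : Fin r → ℚ) (w : Equiv.Perm (Fin r)) :
    (p * p' / 2) * ip (pact (Fin.revPerm * w⁻¹) lam) (pact (Fin.revPerm * w⁻¹) lam)
      - p' * ip (pact (Fin.revPerm * w⁻¹) lam) (weylδ r)
      + p * ip (pact (Fin.revPerm * w⁻¹) lam) (pact (Fin.revPerm * w⁻¹) (weylδ r))
      - ip (pact (Fin.revPerm * w⁻¹) (weylδ r)) (weylδ r)
    = (p * p' / 2) * ip lam lam + p' * ip lam (pact w (weylδ r))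
      + p * ip lam (weylδ r) + ip (pact w (weylδ r)) (weylδ r) := by
  set u : Equiv.Perm (Fin r) := Fin.revPerm * w⁻¹ with hu
  have h1 : ip (pact u lam) (pact u lam) = ip lam lam := ip_pact u lam lam
  have h2 : ip (pact u lam) (weylδ r) = -(ip lam (pact w (weylδ r))) := by
    rw [ip_pact_left]
    have : u⁻¹ = w * Fin.revPerm := by rw [hu, mul_inv_rev, inv_inv, revPerm_inv]
    rw [this, ← pact_pact, pact_rev_weylδ, pact_neg, ip_neg_right]
  have h3 : ip (pact u lam) (pact u (weylδ r)) = ip lam (weylδ r) := ip_pact u lam _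
  have h4 : ip (pact u (weylδ r)) (weylδ r) = -(ip (pact w (weylδ r)) (weylδ r)) := by
    rw [hu, ← pact_pact, ip_pact_left, revPerm_inv, pact_rev_weylδ, ip_neg_right,
      ip_pact_left, inv_inv, ip_comm]
  rw [h1, h2, h3, h4]; ring

/-- in `A = AddMonoidAlgebra ℤ ℚ`,
`Σ_{λ ∈ Π_{r,n}} Σ_{w} sign(w) q^{(pp'/2)‖λ‖² + p'⟨λ,w•δ⟩ + p⟨λ,δ⟩ + ⟨w•δ,δ⟩}
 = (-1)^{r(r-1)/2} Σ_{λ ∈ Π_{r,n}} Σ_{w} sign(w) q^{(pp'/2)‖λ‖² - p'⟨λ,δ⟩ + p⟨λ,w•δ⟩ - ⟨w•δ,δ⟩}`. -/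
theorem stmt13 (r p p' : ℕ) (hr : 2 ≤ r) (hp : 1 ≤ p) (hpp' : p < p')
    (hcop : Nat.Coprime p p') (n : ℕ) :
    ∑ lam ∈ PiFin r n, ∑ w : Equiv.Perm (Fin r),
      (AddMonoidAlgebra.single
        (((p : ℚ) * p' / 2) * ip lam lam + p' * ip lam (pact w (weylδ r))
          + p * ip lam (weylδ r) + ip (pact w (weylδ r)) (weylδ r))
        ((Equiv.Perm.sign w : ℤ)) : AddMonoidAlgebra ℤ ℚ)
    = ((-1 : ℤ) ^ (r * (r - 1) / 2)) •
        ∑ lam ∈ PiFin r n, ∑ w : Equiv.Perm (Fin r),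
          (AddMonoidAlgebra.single
            (((p : ℚ) * p' / 2) * ip lam lam - p' * ip lam (weylδ r)
              + p * ip lam (pact w (weylδ r)) - ip (pact w (weylδ r)) (weylδ r))
            ((Equiv.Perm.sign w : ℤ)) : AddMonoidAlgebra ℤ ℚ) := by
  classical
  have hr1 : 1 ≤ r := le_trans (by norm_num) hr
  have hsq : ((-1 : ℤ) ^ (r * (r - 1) / 2)) * ((-1 : ℤ) ^ (r * (r - 1) / 2)) = 1 := by
    rw [← mul_pow]; norm_num
  rw [Finset.smul_sum]
  simp only [Finset.smul_sum, AddMonoidAlgebra.smul_single', smul_eq_mul]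
  rw [← Finset.sum_product' (f := fun lam w =>
      (AddMonoidAlgebra.single
        (((p : ℚ) * p' / 2) * ip lam lam + p' * ip lam (pact w (weylδ r))
          + p * ip lam (weylδ r) + ip (pact w (weylδ r)) (weylδ r))
        ((Equiv.Perm.sign w : ℤ)) : AddMonoidAlgebra ℤ ℚ)),
    ← Finset.sum_product' (f := fun lam w =>
      (AddMonoidAlgebra.single
        (((p : ℚ) * p' / 2) * ip lam lam - p' * ip lam (weylδ r)
          + p * ip lam (pact w (weylδ r)) - ip (pact w (weylδ r)) (weylδ r))
        (((-1 : ℤ) ^ (r * (r - 1) / 2)) * (Equiv.Perm.sign w : ℤ)) : AddMonoidAlgebra ℤ ℚ))]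
  refine Finset.sum_nbij'
    (fun x => (pact (Fin.revPerm * x.2⁻¹) x.1, Fin.revPerm * x.2⁻¹))
    (fun x => (pact x.2⁻¹ x.1, x.2⁻¹ * Fin.revPerm)) ?_ ?_ ?_ ?_ ?_
  · rintro ⟨lam, w⟩ hx
    rw [Finset.mem_product] at hx ⊢
    exact ⟨pact_mem_PiFin hr1 _ hx.1, Finset.mem_univ _⟩
  · rintro ⟨lam, w⟩ hx
    rw [Finset.mem_product] at hx ⊢
    exact ⟨pact_mem_PiFin hr1 _ hx.1, Finset.mem_univ _⟩
  · rintro ⟨lam, w⟩ _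
    have hgrp : (Fin.revPerm * w⁻¹)⁻¹ * Fin.revPerm = w := by
      rw [mul_inv_rev, inv_inv, mul_assoc, inv_mul_cancel, mul_one]
    refine Prod.ext ?_ ?_
    · show pact (Fin.revPerm * w⁻¹)⁻¹ (pact (Fin.revPerm * w⁻¹) lam) = lam
      rw [pact_pact, inv_mul_cancel, pact_one]
    · show (Fin.revPerm * w⁻¹)⁻¹ * Fin.revPerm = w
      exact hgrp
  · rintro ⟨lam, w⟩ _
    have hgrp : Fin.revPerm * (w⁻¹ * Fin.revPerm)⁻¹ = w := by
      rw [mul_inv_rev, inv_inv, revPerm_inv, ← mul_assoc]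
      have h1 : (Fin.revPerm : Equiv.Perm (Fin r)) * Fin.revPerm = 1 := by
        conv_lhs => rw [← revPerm_inv r]
        exact inv_mul_cancel _
      rw [h1, one_mul]
    refine Prod.ext ?_ ?_
    · show pact (Fin.revPerm * (w⁻¹ * Fin.revPerm)⁻¹) (pact w⁻¹ lam) = lam
      rw [pact_pact, hgrp, mul_inv_cancel, pact_one]
    · exact hgrp
  · rintro ⟨lam, w⟩ _
    dsimp only
    congr 1
    · exact (main_exp r p p' lam w).symm
    · have hs : Equiv.Perm.sign (Fin.revPerm * w⁻¹) =
          ((-1 : ℤˣ) ^ (r * (r - 1) / 2)) * Equiv.Perm.sign w := by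
        rw [map_mul, Equiv.Perm.sign_inv, sign_revPerm]
      rw [hs]
      push_cast
      rw [← mul_assoc, hsq, one_mul]
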